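/- For every hypergraph 𝐑, the collection Ξ_𝐑 of all preteams ({𝐑_{V_a} : a ∈ A}, 𝐑_V), where {V_a}_{a∈A} partitions V and all the restrictions 𝐑_{V_a} and 𝐑_V are connected, is an associative strict clan: (i) every such preteam is a strict team; (ii) the induced preteams obtained by removing root sets are again in Ξ_𝐑; and (iii) grafting a preteam of Ξ_𝐑 into another along a matching participating hypergraph yields a preteam in Ξ_𝐑. -/

import Mathlib

/-! Basic hypergraph notions (following Došen–Petrić / Curien–Obradović–Ivanović). -/

variable {α : Type*}

/-- `ConnIn E X`: the restriction of the edge set `E` to `X` is connected, i.e. every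
nontrivial partition of `X` is crossed by an edge of `E` lying inside `X`. -/
def ConnIn (E : Set (Set α)) (X : Set α) : Prop :=
  ∀ X₁ X₂ : Set α, X₁ ∪ X₂ = X → Disjoint X₁ X₂ → X₁.Nonempty → X₂.Nonempty →
    ∃ e ∈ E, e ⊆ X ∧ ¬ e ⊆ X₁ ∧ ¬ e ⊆ X₂

/-- An atomic hypergraph: a carrier set together with a set of nonempty hyperedges covering
the carrier and containing all singletons. -/
structure HypergraphA (α : Type*) where
  carrier : Set α
  edges : Set (Set α)
  edges_nonempty : ∀ e ∈ edges, e.Nonempty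
  edges_sub : ∀ e ∈ edges, e ⊆ carrier
  atomic : ∀ x ∈ carrier, {x} ∈ edges

/-- A subset `X` is connected in the hypergraph `G`. -/
def HypergraphA.ConnectedIn (G : HypergraphA α) (X : Set α) : Prop := ConnIn G.edges X

/-- The hypergraph `G` is connected. -/
def HypergraphA.Connected (G : HypergraphA α) : Prop := G.ConnectedIn G.carrier

/-- Restriction of a hypergraph to a subset. -/
def HypergraphA.restrict (G : HypergraphA α) (X : Set α) : HypergraphA α where
  carrier := G.carrier ∩ X
  edges := {e | e ∈ G.edges ∧ e ⊆ X}
  edges_nonempty := fun e he => G.edges_nonempty e he.1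
  edges_sub := fun e he => Set.subset_inter (G.edges_sub e he.1) he.2
  atomic := fun x hx => ⟨G.atomic x hx.1, Set.singleton_subset_iff.2 hx.2⟩

/-- `Y` is a connected component of the hypergraph `G`: a maximal nonempty connected subset
of the carrier. -/
def IsCC (G : HypergraphA α) (Y : Set α) : Prop :=
  Y.Nonempty ∧ Y ⊆ G.carrier ∧ G.ConnectedIn Y ∧
    ∀ Z, Y ⊆ Z → Z ⊆ G.carrier → G.ConnectedIn Z → Z = Y

/-- Membership in the clan `Ξ_R` of restrictohedra: `P` is a set of carriers of the
participating hypergraphs (the restrictions `R_W`, `W ∈ P`), partitioning the carrier `V`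
of the coordinating hypergraph `R_V`, with all restrictions involved connected and `V`
finite nonempty. -/
def InXi (R : HypergraphA α) (P : Set (Set α)) (V : Set α) : Prop :=
  V.Finite ∧ V.Nonempty ∧ V ⊆ R.carrier ∧ R.ConnectedIn V ∧
    (∀ W ∈ P, W.Nonempty ∧ R.ConnectedIn W) ∧
    ⋃₀ P = V ∧
    (∀ W₁ ∈ P, ∀ W₂ ∈ P, W₁ ≠ W₂ → Disjoint W₁ W₂)

/-- The preteam `({R_W : W ∈ P}, R_V)` is a strict team: for each nonempty `B ⊆ P` and
nonempty roots `X b ⊆ b` (`b ∈ B`), each participating carrier not in `B` and each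
connected component of `R_b` minus `X b` lies inside a single connected component of
`R_V` minus `⋃_{b ∈ B} X b`. -/
def IsStrictTeamS (R : HypergraphA α) (P : Set (Set α)) (V : Set α) : Prop :=
  ∀ B ⊆ P, B.Nonempty → ∀ X : Set α → Set α,
    (∀ b ∈ B, (X b).Nonempty ∧ X b ⊆ b) →
    (∀ a ∈ P \ B, ∃ Y, IsCC ((R.restrict V).restrict (V \ ⋃ b ∈ B, X b)) Y ∧ a ⊆ Y) ∧
    (∀ b ∈ B, ∀ C, IsCC ((R.restrict b).restrict (b \ X b)) C →
      ∃ Y, IsCC ((R.restrict V).restrict (V \ ⋃ b ∈ B, X b)) Y ∧ C ⊆ Y)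

section Aux

lemma connIn_transfer {E E' : Set (Set α)} {X : Set α}
    (h : ∀ e ∈ E, e ⊆ X → e ∈ E') (hc : ConnIn E X) : ConnIn E' X := by
  intro X₁ X₂ hu hd h1 h2
  obtain ⟨e, he, hsub, h1', h2'⟩ := hc X₁ X₂ hu hd h1 h2
  exact ⟨e, h e he hsub, hsub, h1', h2'⟩

lemma connIn_subsingleton {E : Set (Set α)} {X : Set α} (h : X.Subsingleton) : ConnIn E X := by
  intro X₁ X₂ hu hd h1 h2
  obtain ⟨x, hx⟩ := h1
  obtain ⟨y, hy⟩ := h2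
  have hxy : x = y := h (hu ▸ (Or.inl hx : x ∈ X₁ ∪ X₂)) (hu ▸ (Or.inr hy : y ∈ X₁ ∪ X₂))
  cases hxy
  exact (Set.disjoint_left.mp hd hx hy).elim

lemma connIn_union {E : Set (Set α)} {A B : Set α} (hA : ConnIn E A) (hB : ConnIn E B)
    (hAB : (A ∩ B).Nonempty) : ConnIn E (A ∪ B) := by
  obtain ⟨x, hxA, hxB⟩ := hAB
  have key : ∀ X₁ X₂ : Set α, X₁ ∪ X₂ = A ∪ B → Disjoint X₁ X₂ → X₂.Nonempty → x ∈ X₁ →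
      ∃ e ∈ E, e ⊆ A ∪ B ∧ ¬ e ⊆ X₁ ∧ ¬ e ⊆ X₂ := by
    intro X₁ X₂ hu hd h2 hx1
    obtain ⟨y, hy⟩ := h2
    have hyAB : y ∈ A ∪ B := hu ▸ (Or.inr hy : y ∈ X₁ ∪ X₂)
    have keyC : ∀ C : Set α, ConnIn E C → C ⊆ A ∪ B → x ∈ C → y ∈ C →
        ∃ e ∈ E, e ⊆ A ∪ B ∧ ¬ e ⊆ X₁ ∧ ¬ e ⊆ X₂ := by
      intro C hC hCAB hxC hyC
      obtain ⟨e, he, hes, he1, he2⟩ := hC (C ∩ X₁) (C ∩ X₂)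
        (by rw [← Set.inter_union_distrib_left, hu, Set.inter_eq_left]; exact hCAB)
        (hd.mono Set.inter_subset_right Set.inter_subset_right)
        ⟨x, hxC, hx1⟩ ⟨y, hyC, hy⟩
      exact ⟨e, he, hes.trans hCAB, fun h => he1 (Set.subset_inter hes h),
        fun h => he2 (Set.subset_inter hes h)⟩
    rcases hyAB with hyA | hyB
    · exact keyC A hA Set.subset_union_left hxA hyA
    · exact keyC B hB Set.subset_union_right hxB hyB
  intro X₁ X₂ hu hd h1 h2
  have hx : x ∈ X₁ ∪ X₂ := hu ▸ (Or.inl hxA : x ∈ A ∪ B)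
  rcases hx with hx | hx
  · exact key X₁ X₂ hu hd h2 hx
  · obtain ⟨e, he, hes, he1, he2⟩ := key X₂ X₁ (by rw [Set.union_comm]; exact hu) hd.symm h1 hx
    exact ⟨e, he, hes, he2, he1⟩

lemma exists_cc (G : HypergraphA α) (hfin : G.carrier.Finite) {C : Set α}
    (hne : C.Nonempty) (hsub : C ⊆ G.carrier) (hconn : G.ConnectedIn C) :
    ∃ Y, IsCC G Y ∧ C ⊆ Y := by
  have hSfin : {Z : Set α | C ⊆ Z ∧ Z ⊆ G.carrier ∧ G.ConnectedIn Z}.Finite :=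
    hfin.finite_subsets.subset fun Z hZ => hZ.2.1
  obtain ⟨Y, hYS, hmax⟩ := Set.Finite.exists_maximalFor id _ hSfin ⟨C, subset_rfl, hsub, hconn⟩
  exact ⟨Y, ⟨hne.mono hYS.1, hYS.2.1, hYS.2.2,
    fun Z hYZ hZc hZconn => Set.Subset.antisymm (hmax ⟨hYS.1.trans hYZ, hZc, hZconn⟩ hYZ) hYZ⟩, hYS.1⟩

lemma IsCC.eq_of_inter {G : HypergraphA α} {Y₁ Y₂ : Set α}
    (h1 : IsCC G Y₁) (h2 : IsCC G Y₂) (h : (Y₁ ∩ Y₂).Nonempty) : Y₁ = Y₂ := by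
  have hu : G.ConnectedIn (Y₁ ∪ Y₂) := connIn_union h1.2.2.1 h2.2.2.1 h
  have e1 := h1.2.2.2 (Y₁ ∪ Y₂) Set.subset_union_left (Set.union_subset h1.2.1 h2.2.1) hu
  have e2 := h2.2.2.2 (Y₁ ∪ Y₂) Set.subset_union_right (Set.union_subset h1.2.1 h2.2.1) hu
  exact e1.symm.trans e2

end Aux

lemma xi_strict (R : HypergraphA α) {P : Set (Set α)} {V : Set α} (hPV : InXi R P V) :
    IsStrictTeamS R P V := by
  obtain ⟨hVfin, hVne, hVsub, hVconn, hpart, hcover, hdisj⟩ := hPV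
  intro B hBP hBne X hX
  set S := V \ ⋃ b ∈ B, X b with hSdef
  set G := (R.restrict V).restrict S with hGdef
  have hGcar : G.carrier = (R.carrier ∩ V) ∩ S := rfl
  have hGfin : G.carrier.Finite := hVfin.subset (fun x hx => hx.1.2)
  have main : ∀ C : Set α, C.Nonempty → C ⊆ S → ConnIn R.edges C →
      ∃ Y, IsCC G Y ∧ C ⊆ Y := by
    intro C hCne hCS hCconn
    have hCV : C ⊆ V := hCS.trans Set.diff_subset
    have hCG : ConnIn G.edges C := connIn_transfer
      (fun e he hsub => ⟨⟨he, hsub.trans hCV⟩, hsub.trans hCS⟩) hCconn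
    exact exists_cc G hGfin hCne (fun x hx => ⟨⟨hVsub (hCV hx), hCV hx⟩, hCS hx⟩) hCG
  refine ⟨?_, ?_⟩
  · intro a ha
    have haP := ha.1
    have haV : a ⊆ V := by rw [← hcover]; exact fun x hx => ⟨a, haP, hx⟩
    have haS : a ⊆ S := by
      intro x hx
      refine ⟨haV hx, fun hmem => ?_⟩
      obtain ⟨b, hb, hxb⟩ := Set.mem_iUnion₂.mp hmem
      exact (Set.disjoint_left.mp
        (hdisj a haP b (hBP hb) (by rintro rfl; exact ha.2 hb)) hx) ((hX b hb).2 hxb)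
    exact main a (hpart a haP).1 haS (hpart a haP).2
  · intro b hb C hC
    obtain ⟨hCne, hCsub, hCconn, -⟩ := hC
    have hCb : C ⊆ b \ X b := fun x hx => (hCsub hx).2
    have hbV : b ⊆ V := by rw [← hcover]; exact fun x hx => ⟨b, hBP hb, hx⟩
    have hCS : C ⊆ S := by
      intro x hx
      have hxb := hCb hx
      refine ⟨hbV hxb.1, fun hmem => ?_⟩
      obtain ⟨b', hb', hxb'⟩ := Set.mem_iUnion₂.mp hmem
      by_cases hbb : b' = b
      · exact hxb.2 (hbb ▸ hxb')
      · exact (Set.disjoint_left.mp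
          (hdisj b (hBP hb) b' (hBP hb') (Ne.symm hbb)) hxb.1) ((hX b' hb').2 hxb')
    exact main C hCne hCS (connIn_transfer (fun e he _ => he.1.1) hCconn)

lemma xi_decomp (R : HypergraphA α) {P : Set (Set α)} {V : Set α} (hPV : InXi R P V)
    {B : Set (Set α)} (hBP : B ⊆ P) (hBne : B.Nonempty) (X : Set α → Set α)
    (hX : ∀ b ∈ B, (X b).Nonempty ∧ X b ⊆ b)
    {Y : Set α} (hY : IsCC ((R.restrict V).restrict (V \ ⋃ b ∈ B, X b)) Y) :
    InXi R ({C | C ∈ P \ B ∧ C ⊆ Y} ∪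
      {C | ∃ b ∈ B, IsCC ((R.restrict b).restrict (b \ X b)) C ∧ C ⊆ Y}) Y := by
  have strict := xi_strict R hPV B hBP hBne X hX
  obtain ⟨hVfin, hVne, hVsub, hVconn, hpart, hcover, hdisj⟩ := hPV
  have hYG : Y ⊆ ((R.restrict V).restrict (V \ ⋃ b ∈ B, X b)).carrier := hY.2.1
  have hYV : Y ⊆ V := fun x hx => (hYG hx).1.2
  have hYS : Y ⊆ V \ ⋃ b ∈ B, X b := fun x hx => (hYG hx).2
  refine ⟨hVfin.subset hYV, hY.1, fun x hx => (hYG hx).1.1,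
    connIn_transfer (fun e he _ => he.1.1) hY.2.2.1, ?_, ?_, ?_⟩
  · rintro W (⟨hWP, hWY⟩ | ⟨b, hb, hC, hWY⟩)
    · exact hpart W hWP.1
    · exact ⟨hC.1, connIn_transfer (fun e he _ => he.1.1) hC.2.2.1⟩
  · apply Set.Subset.antisymm
    · apply Set.sUnion_subset
      rintro W (⟨hWP, hWY⟩ | ⟨b, hb, hC, hWY⟩) <;> exact hWY
    · intro x hx
      obtain ⟨a, haP, hxa⟩ := (hcover ▸ hYV hx : x ∈ ⋃₀ P)
      by_cases haB : a ∈ B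
      · -- x lies in a component of R restricted to a \ X a
        have hxXa : x ∉ X a := fun h => (hYS hx).2 (Set.mem_iUnion₂.mpr ⟨a, haB, h⟩)
        have haV : a ⊆ V := by rw [← hcover]; exact fun z hz => ⟨a, haP, hz⟩
        obtain ⟨C, hC, hxC⟩ := exists_cc ((R.restrict a).restrict (a \ X a))
          (hVfin.subset fun z hz => haV hz.1.2)
          (Set.singleton_nonempty x)
          (Set.singleton_subset_iff.mpr ⟨⟨hVsub (haV hxa), hxa⟩, hxa, hxXa⟩)
          (connIn_subsingleton Set.subsingleton_singleton)
        obtain ⟨Y', hY', hCY'⟩ := strict.2 a haB C hC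
        have : Y' = Y := hY'.eq_of_inter hY ⟨x, hCY' (hxC rfl), hx⟩
        exact ⟨C, Or.inr ⟨a, haB, hC, this ▸ hCY'⟩, hxC rfl⟩
      · obtain ⟨Y', hY', haY'⟩ := strict.1 a ⟨haP, haB⟩
        have : Y' = Y := hY'.eq_of_inter hY ⟨x, haY' hxa, hx⟩
        exact ⟨a, Or.inl ⟨⟨haP, haB⟩, this ▸ haY'⟩, hxa⟩
  · have mixed : ∀ W₁, W₁ ∈ P \ B → ∀ W₂, (∃ b ∈ B,
        IsCC ((R.restrict b).restrict (b \ X b)) W₂ ∧ W₂ ⊆ Y) → Disjoint W₁ W₂ := by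
      rintro W₁ ⟨h1P, h1B⟩ W₂ ⟨b, hb, hC, -⟩
      have hW2b : W₂ ⊆ b := fun x hx => (hC.2.1 hx).1.2
      exact (hdisj W₁ h1P b (hBP hb) (by rintro rfl; exact h1B hb)).mono_right hW2b
    rintro W₁ (⟨h1P, h1Y⟩ | h1) W₂ (⟨h2P, h2Y⟩ | h2) hne
    · exact hdisj W₁ h1P.1 W₂ h2P.1 hne
    · exact mixed W₁ h1P W₂ h2
    · exact (mixed W₂ h2P W₁ h1).symm
    · obtain ⟨b₁, hb₁, hC₁, -⟩ := h1
      obtain ⟨b₂, hb₂, hC₂, -⟩ := h2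
      by_cases hbb : b₁ = b₂
      · subst hbb
        by_contra h
        exact hne (hC₁.eq_of_inter hC₂ (Set.not_disjoint_iff_nonempty_inter.mp h))
      · exact ((hdisj b₁ (hBP hb₁) b₂ (hBP hb₂) hbb).mono
          (fun x hx => (hC₁.2.1 hx).1.2) (fun x hx => (hC₂.2.1 hx).1.2))

lemma xi_graft (R : HypergraphA α) {P P' : Set (Set α)} {V V₀ : Set α}
    (hPV : InXi R P V) (hV₀ : V₀ ∈ P) (hP' : InXi R P' V₀) :
    InXi R ((P \ {V₀}) ∪ P') V := by
  obtain ⟨hVfin, hVne, hVsub, hVconn, hpart, hcover, hdisj⟩ := hPV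
  obtain ⟨-, -, -, -, hpart', hcover', hdisj'⟩ := hP'
  refine ⟨hVfin, hVne, hVsub, hVconn, ?_, ?_, ?_⟩
  · rintro W (⟨hWP, -⟩ | hWP')
    · exact hpart W hWP
    · exact hpart' W hWP'
  · apply Set.Subset.antisymm
    · apply Set.sUnion_subset
      rintro W (⟨hWP, -⟩ | hWP')
      · rw [← hcover]; exact fun x hx => ⟨W, hWP, hx⟩
      · intro x hx
        have : x ∈ V₀ := by rw [← hcover']; exact ⟨W, hWP', hx⟩
        rw [← hcover]; exact ⟨V₀, hV₀, this⟩
    · intro x hx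
      obtain ⟨a, haP, hxa⟩ := (hcover ▸ hx : x ∈ ⋃₀ P)
      by_cases ha : a = V₀
      · subst ha
        obtain ⟨W, hW, hxW⟩ := (hcover' ▸ hxa : x ∈ ⋃₀ P')
        exact ⟨W, Or.inr hW, hxW⟩
      · exact ⟨a, Or.inl ⟨haP, ha⟩, hxa⟩
  · have hsub' : ∀ W ∈ P', W ⊆ V₀ := fun W hW => by
      rw [← hcover']; exact fun x hx => ⟨W, hW, hx⟩
    rintro W₁ (⟨h1P, h1⟩ | h1) W₂ (⟨h2P, h2⟩ | h2) hne
    · exact hdisj W₁ h1P W₂ h2P hne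
    · exact (hdisj W₁ h1P V₀ hV₀ h1).mono_right (hsub' W₂ h2)
    · exact ((hdisj W₂ h2P V₀ hV₀ h2).mono_right (hsub' W₁ h1)).symm
    · exact hdisj' W₁ h1 W₂ h2 hne

/-- For every hypergraph `R`, the collection `Ξ_R` of preteams of connected restrictions of
`R` is an associative strict clan:
(i) every preteam in `Ξ_R` is a strict team;
(ii) `Ξ_R` is closed under the induced decompositions: removing nonempty roots `X b ⊆ b`
for `b` in a nonempty `B ⊆ P` and passing to a connected component `Y` of the coordinating
hypergraph minus the roots, the induced preteam (whose participants are the carriers `a ∈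
P \ B` contained in `Y` and the components of the `R_b` minus `X b` contained in `Y`) is
again in `Ξ_R`;
(iii) `Ξ_R` is closed under grafting a preteam of `Ξ_R` into another along a matching
participating hypergraph. -/
theorem stmt12 (R : HypergraphA α) :
    (∀ P V, InXi R P V → IsStrictTeamS R P V) ∧
    (∀ P V, InXi R P V → ∀ B ⊆ P, B.Nonempty → ∀ X : Set α → Set α,
      (∀ b ∈ B, (X b).Nonempty ∧ X b ⊆ b) →
      ∀ Y, IsCC ((R.restrict V).restrict (V \ ⋃ b ∈ B, X b)) Y →
        InXi R ({C | C ∈ P \ B ∧ C ⊆ Y} ∪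
          {C | ∃ b ∈ B, IsCC ((R.restrict b).restrict (b \ X b)) C ∧ C ⊆ Y}) Y) ∧
    (∀ P V V₀ P', InXi R P V → V₀ ∈ P → InXi R P' V₀ →
      InXi R ((P \ {V₀}) ∪ P') V) := by
  exact ⟨fun P V h => xi_strict R h,
    fun P V h B hBP hBne X hX Y hY => xi_decomp R h hBP hBne X hX hY,
    fun P V V₀ P' h hV₀ h' => xi_graft R h hV₀ h'⟩
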